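/- If a forcing poset P is ccc, then a subset Q ⊆ P is ultrafilter-linked (D-linked for every nonprincipal ultrafilter D on ℕ) if and only if Q is Fr-linked (linked with respect to the Fréchet filter). -/

import Mathlib

open Filter

/-- For a ccc forcing poset `P` and `Q ⊆ P`: `Q` is ultrafilter-linked iff `Q` is
Fr-linked.  Both notions are unfolded semantically: `q` forces `Ẇ(p̄) = {n : p n ∈ Ġ}` to
be `F`-positive iff every `r ≤ q` and every `a ∈ F⁺`-witness admits a compatible `p k`.
For the Fréchet filter, positivity means infinity: `∀ r ≤ q, ∀ n, ∃ k ≥ n` with `r`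
compatible with `p k`.  For an ultrafilter `D`, positivity means meeting every member of
`D`: `∀ r ≤ q, ∀ a ∈ D, ∃ k ∈ a` with `r` compatible with `p k`. -/
theorem stmt14 {P : Type*} [Preorder P]
    (hccc : ∀ A : Set P,
      (∀ p ∈ A, ∀ q ∈ A, p ≠ q → ¬ ∃ r : P, r ≤ p ∧ r ≤ q) → A.Countable)
    (Q : Set P) :
    (∀ p : ℕ → P, (∀ n, p n ∈ Q) →
      ∃ q : P, ∀ r ≤ q, ∀ n : ℕ, ∃ k, n ≤ k ∧ ∃ c : P, c ≤ r ∧ c ≤ p k) ↔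
    (∀ D : Ultrafilter ℕ, (∀ a ∈ D, a.Infinite) →
      ∀ p : ℕ → P, (∀ n, p n ∈ Q) →
        ∃ q : P, ∀ r ≤ q, ∀ a ∈ D, ∃ k ∈ a, ∃ c : P, c ≤ r ∧ c ≤ p k) := by
  constructor
  · -- Fr-linked → uf-linked (uses ccc)
    intro hFr D hD p hp
    by_contra hcon
    push_neg at hcon
    -- The set of conditions witnessing failure is dense.
    set R : Set P := {r | ∃ a ∈ D, ∀ k ∈ a, ¬ ∃ c : P, c ≤ r ∧ c ≤ p k} with hR
    have hdense : ∀ q : P, ∃ r ∈ R, r ≤ q := by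
      intro q
      obtain ⟨r, hrq, a, haD, hra⟩ := hcon q
      refine ⟨r, ⟨a, haD, ?_⟩, hrq⟩
      intro k hk ⟨c, hcr, hcp⟩
      exact hra k hk c hcr hcp
    -- Zorn: get a maximal antichain A inside R.
    have hzorn : ∃ A, Maximal (fun A : Set P => A ⊆ R ∧
        ∀ x ∈ A, ∀ y ∈ A, x ≠ y → ¬ ∃ c : P, c ≤ x ∧ c ≤ y) A := by
      apply zorn_subset
      intro c hc hchain
      refine ⟨⋃₀ c, ⟨?_, ?_⟩, fun s hs => Set.subset_sUnion_of_mem hs⟩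
      · intro x ⟨s, hs, hxs⟩
        exact (hc hs).1 hxs
      · rintro x ⟨s, hs, hxs⟩ y ⟨t, ht, hyt⟩ hxy
        rcases hchain.total hs ht with h | h
        · exact (hc ht).2 x (h hxs) y hyt hxy
        · exact (hc hs).2 x hxs y (h hyt) hxy
    obtain ⟨A, ⟨⟨hAR, hAanti⟩, hAmax'⟩⟩ := hzorn
    have hAmax : ∀ B, (B ⊆ R ∧ ∀ x ∈ B, ∀ y ∈ B, x ≠ y → ¬ ∃ c : P, c ≤ x ∧ c ≤ y) →
        A ⊆ B → B = A := fun B hB hAB => Set.Subset.antisymm (hAmax' hB hAB) hAB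
    -- A is countable by ccc; A is nonempty since R is dense (and P is nonempty).
    have hAne : A.Nonempty := by
      rcases Set.eq_empty_or_nonempty A with h | h
      · exfalso
        obtain ⟨r, hrR, -⟩ := hdense (p 0)
        have := hAmax {r} ⟨by simpa using hrR, by
          intro x hx y hy hxy
          simp only [Set.mem_singleton_iff] at hx hy
          exact absurd (hx.trans hy.symm) hxy⟩ (by simp [h])
        simp [h] at this
      · exact h
    obtain ⟨rbar, hrbar⟩ := (hccc A hAanti).exists_eq_range hAne
    -- Choose witnessing sets a n ∈ D for each rbar n.
    have hwit : ∀ n : ℕ, ∃ a ∈ D, ∀ k ∈ a, ¬ ∃ c : P, c ≤ rbar n ∧ c ≤ p k := by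
      intro n
      have : rbar n ∈ A := hrbar ▸ ⟨n, rfl⟩
      exact hAR this
    choose a haD hawit using hwit
    -- Diagonal sequence: k n is in a i for all i ≤ n.
    have hint : ∀ n : ℕ, (⋂ i ∈ Finset.Iic n, a i).Nonempty := by
      intro n
      have hmem : (⋂ i ∈ Finset.Iic n, a i) ∈ D :=
        (Filter.biInter_finset_mem (Finset.Iic n)).2 fun i _ => haD i
      exact (hD _ hmem).nonempty
    choose k hk using hint
    have hkmem : ∀ i n : ℕ, i ≤ n → k n ∈ a i := by
      intro i n hin
      have := hk n
      simp only [Set.mem_iInter] at this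
      exact this i (Finset.mem_Iic.2 hin)
    -- Apply Fr-linkedness to the subsequence p ∘ k.
    obtain ⟨q, hq⟩ := hFr (fun n => p (k n)) (fun n => hp (k n))
    -- q is compatible with some member of A.
    obtain ⟨r, hrR, hrq⟩ := hdense q
    have hcompat : ∃ x ∈ A, ∃ c : P, c ≤ r ∧ c ≤ x := by
      by_contra hno
      push_neg at hno
      have hrA : r ∉ A := fun hrA => hno r hrA r le_rfl le_rfl
      have : A ∪ {r} = A := hAmax (A ∪ {r}) ⟨by
          intro x hx
          rcases hx with hx | hx
          · exact hAR hx
          · simpa using (Set.mem_singleton_iff.1 hx ▸ hrR)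
        , by
          rintro x hx y hy hxy hc
          rcases hx with hx | hx <;> rcases hy with hy | hy
          · exact hAanti x hx y hy hxy hc
          · obtain ⟨c, hcx, hcy⟩ := hc
            rw [Set.mem_singleton_iff] at hy
            subst hy
            exact hno x hx c hcy hcx
          · obtain ⟨c, hcx, hcy⟩ := hc
            rw [Set.mem_singleton_iff] at hx
            subst hx
            exact hno y hy c hcx hcy
          · rw [Set.mem_singleton_iff] at hx hy
            exact hxy (hx.trans hy.symm)⟩ Set.subset_union_left
      exact hrA (this ▸ Set.mem_union_right A rfl)
    obtain ⟨x, hxA, c, hcr, hcx⟩ := hcompat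
    obtain ⟨i, hi⟩ : ∃ i, rbar i = x := by
      have : x ∈ Set.range rbar := hrbar ▸ hxA
      exact this
    -- c ≤ q, so below c we find compatibility with p (k n) for some n ≥ i.
    obtain ⟨n, hin, d, hdc, hdp⟩ := hq c (hcr.trans hrq) i
    exact hawit i (k n) (hkmem i n hin) ⟨d, hdc.trans (hcx.trans_eq hi.symm), hdp⟩
  · -- uf-linked → Fr-linked (use the hyperfilter)
    intro huf p hp
    have hDinf : ∀ a ∈ hyperfilter ℕ, a.Infinite := by
      intro a ha
      by_contra hfin
      exact Filter.notMem_hyperfilter_of_finite (Set.not_infinite.1 hfin) ha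
    obtain ⟨q, hq⟩ := huf (hyperfilter ℕ) hDinf p hp
    refine ⟨q, fun r hr n => ?_⟩
    have hmem : {k : ℕ | n ≤ k} ∈ hyperfilter ℕ := by
      have : {k : ℕ | n ≤ k}ᶜ.Finite := by
        apply Set.Finite.subset (Set.finite_Iio n)
        intro x hx
        simpa [Set.mem_Iio] using Nat.lt_of_not_le hx
      simpa using Filter.compl_mem_hyperfilter_of_finite this
    obtain ⟨k, hk, hc⟩ := hq r hr _ hmem
    exact ⟨k, hk, hc⟩
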